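/- Let (T₁,T₂,T) be a tetrablock contraction on a complex Hilbert space H with fundamental operators F₁, F₂, and suppose T is a partial isometry (T T* T = T). Then F₁F₂ = F₂F₁. -/

import Mathlib

/- Common definitions: the tetrablock, tetrablock contractions, defect operators and
defect spaces, fundamental operators, tetrablock isometries and tetrablock-isometric lifts. -/

noncomputable section

open ContinuousLinearMap

universe u

/-- The tetrablock domain `𝔼 ⊆ ℂ³`: points `(x₁,x₂,x₃)` of the form
`(a₁₁, a₂₂, det A)` for some `2×2` complex matrix `A` of operator norm `< 1`. -/
def tetrablock : Set (Fin 3 → ℂ) :=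
  {x | ∃ A : Matrix (Fin 2) (Fin 2) ℂ,
    ‖Matrix.toEuclideanCLM (𝕜 := ℂ) A‖ < 1 ∧ x 0 = A 0 0 ∧ x 1 = A 1 1 ∧ x 2 = A.det}

variable {H : Type u} [NormedAddCommGroup H] [InnerProductSpace ℂ H] [CompleteSpace H]

/-- Evaluation `p(T₁,T₂,T)` of a three-variable polynomial at a (commuting) operator
triple: substitute `T₁,T₂,T` monomial-wise (order is immaterial for commuting triples). -/
def polyEval (T₁ T₂ T : H →L[ℂ] H) (p : MvPolynomial (Fin 3) ℂ) : H →L[ℂ] H :=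
  p.support.sum fun m => p.coeff m • (T₁ ^ m 0 * T₂ ^ m 1 * T ^ m 2)

/-- A tetrablock contraction: a commuting triple for which the closed tetrablock is a
spectral set. -/
def IsTetrablockContraction (T₁ T₂ T : H →L[ℂ] H) : Prop :=
  Commute T₁ T₂ ∧ Commute T₁ T ∧ Commute T₂ T ∧
  ∀ p : MvPolynomial (Fin 3) ℂ,
    ‖polyEval T₁ T₂ T p‖ ≤
      sSup {y : ℝ | ∃ x ∈ closure tetrablock, y = ‖MvPolynomial.eval x p‖}

/-- The defect operator `D_T = (I - T*T)^{1/2}` of a contraction `T`. -/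
def defect (T : H →L[ℂ] H) : H →L[ℂ] H := CFC.sqrt (1 - adjoint T * T)

/-- The defect space `𝒟_T`, the closure of the range of `D_T`. -/
def defectSpace (T : H →L[ℂ] H) : Submodule ℂ H :=
  (LinearMap.range (defect T : H →ₗ[ℂ] H)).topologicalClosure

lemma defect_mem (T : H →L[ℂ] H) (h : H) : defect T h ∈ defectSpace T :=
  Submodule.le_topologicalClosure _ ⟨h, rfl⟩

/-- The defect operator `D_T`, viewed as a map from `H` into the defect space `𝒟_T`. -/
def defectTo (T : H →L[ℂ] H) : H →L[ℂ] defectSpace T :=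
  (defect T).codRestrict _ (defect_mem T)

instance (T : H →L[ℂ] H) : CompleteSpace (defectSpace T) :=
  (Submodule.isClosed_topologicalClosure _).completeSpace_coe

/-- `F₁, F₂` are fundamental operators for `(T₁,T₂,T)`:
`T₁ - T₂* T = D_T F₁ D_T` and `T₂ - T₁* T = D_T F₂ D_T`. -/
def AreFundamentalOps (T₁ T₂ T : H →L[ℂ] H)
    (F₁ F₂ : defectSpace T →L[ℂ] defectSpace T) : Prop :=
  T₁ - adjoint T₂ * T = (defectSpace T).subtypeL ∘L F₁ ∘L defectTo T ∧
  T₂ - adjoint T₁ * T = (defectSpace T).subtypeL ∘L F₂ ∘L defectTo T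

/-- A tetrablock isometry: a commuting triple `(V₁,V₂,V)` with `V` an isometry,
`‖V₂‖ ≤ 1` and `V₁ = V₂* V`. -/
def IsTetrablockIsometry {K : Type u} [NormedAddCommGroup K] [InnerProductSpace ℂ K]
    [CompleteSpace K] (V₁ V₂ V : K →L[ℂ] K) : Prop :=
  Commute V₁ V₂ ∧ Commute V₁ V ∧ Commute V₂ V ∧
    adjoint V * V = 1 ∧ ‖V₂‖ ≤ 1 ∧ V₁ = adjoint V₂ * V

/-- `(T₁,T₂,T)` has a tetrablock-isometric lift: a tetrablock isometry `(V₁,V₂,V)` on a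
space `K ⊇ H` whose adjoints extend the adjoints of `T₁,T₂,T`. -/
def HasTetrablockIsometricLift (T₁ T₂ T : H →L[ℂ] H) : Prop :=
  ∃ (K : Type u) (_ : NormedAddCommGroup K) (_ : InnerProductSpace ℂ K) (_ : CompleteSpace K)
    (ι : H →ₗᵢ[ℂ] K) (V₁ V₂ V : K →L[ℂ] K),
      IsTetrablockIsometry V₁ V₂ V ∧
      (∀ h : H, adjoint V₁ (ι h) = ι (adjoint T₁ h)) ∧
      (∀ h : H, adjoint V₂ (ι h) = ι (adjoint T₂ h)) ∧
      (∀ h : H, adjoint V (ι h) = ι (adjoint T h))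

set_option synthInstance.maxHeartbeats 1000000 in
set_option maxHeartbeats 1000000 in
lemma defect_eq_of_partialIsometry (T : H →L[ℂ] H) (hpi : T * adjoint T * T = T) :
    defect T = 1 - adjoint T * T := by
  have hsa : star (1 - adjoint T * T) = 1 - adjoint T * T := by
    simp [star_sub, star_mul, star_eq_adjoint]
  have hidem : (1 - adjoint T * T) * (1 - adjoint T * T) = 1 - adjoint T * T := by
    have h : adjoint T * T * (adjoint T * T) = adjoint T * T := by
      rw [mul_assoc, ← mul_assoc T, hpi]
    noncomm_ring [h]
  have hpos : (0 : H →L[ℂ] H) ≤ 1 - adjoint T * T := by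
    calc (0 : H →L[ℂ] H) ≤ star (1 - adjoint T * T) * (1 - adjoint T * T) :=
          star_mul_self_nonneg _
      _ = 1 - adjoint T * T := by rw [hsa, hidem]
  exact CFC.sqrt_unique hidem hpos

/-- for a tetrablock contraction `(T₁,T₂,T)` with `T` a partial isometry,
the fundamental operators commute. -/
theorem fundamentalOps_commute_of_partialIsometry
    (T₁ T₂ T : H →L[ℂ] H) (hT : IsTetrablockContraction T₁ T₂ T)
    (hpi : T * adjoint T * T = T)
    (F₁ F₂ : defectSpace T →L[ℂ] defectSpace T)
    (hF : AreFundamentalOps T₁ T₂ T F₁ F₂) :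
    F₁ * F₂ = F₂ * F₁ := by
  have hD : defect T = 1 - adjoint T * T := defect_eq_of_partialIsometry T hpi
  have hDD : defect T * defect T = defect T := by
    rw [hD]
    have h : adjoint T * T * (adjoint T * T) = adjoint T * T := by
      rw [mul_assoc, ← mul_assoc T, hpi]
    noncomm_ring [h]
  have hTD : T * defect T = 0 := by
    rw [hD]
    have : T * (1 - adjoint T * T) = T - T * adjoint T * T := by noncomm_ring
    rw [this, hpi, sub_self]
  -- `defect T` fixes the defect space, and `T` vanishes on it
  have hQfix : ∀ d ∈ defectSpace T, defect T d = d := by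
    intro d hd
    have hd' : d ∈ closure (LinearMap.range (defect T : H →ₗ[ℂ] H) : Set H) := by
      rw [← Submodule.topologicalClosure_coe]; exact hd
    have hcl : IsClosed {x : H | defect T x = x} :=
      isClosed_eq (defect T).continuous continuous_id
    have hsub : (LinearMap.range (defect T : H →ₗ[ℂ] H) : Set H) ⊆ {x | defect T x = x} := by
      rintro x ⟨y, rfl⟩
      show defect T (defect T y) = defect T y
      rw [← ContinuousLinearMap.mul_apply, hDD]
    exact closure_minimal hsub hcl hd'
  have hTd : ∀ d ∈ defectSpace T, T d = 0 := by
    intro d hd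
    have hd' : d ∈ closure (LinearMap.range (defect T : H →ₗ[ℂ] H) : Set H) := by
      rw [← Submodule.topologicalClosure_coe]; exact hd
    have hcl : IsClosed {x : H | T x = 0} :=
      isClosed_eq T.continuous continuous_const
    have hsub : (LinearMap.range (defect T : H →ₗ[ℂ] H) : Set H) ⊆ {x | T x = 0} := by
      rintro x ⟨y, rfl⟩
      show T (defect T y) = 0
      rw [← ContinuousLinearMap.mul_apply, hTD, ContinuousLinearMap.zero_apply]
    exact closure_minimal hsub hcl hd'
  have hDId : ∀ d : defectSpace T, defectTo T (d : H) = d := by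
    intro d
    exact Subtype.ext (hQfix (d : H) d.2)
  set G₁ : H →L[ℂ] H := (defectSpace T).subtypeL ∘L F₁ ∘L defectTo T with hG₁
  set G₂ : H →L[ℂ] H := (defectSpace T).subtypeL ∘L F₂ ∘L defectTo T with hG₂
  have hT₁ : T₁ = adjoint T₂ * T + G₁ := by rw [hG₁, ← hF.1]; abel
  have hT₂ : T₂ = adjoint T₁ * T + G₂ := by rw [hG₂, ← hF.2]; abel
  have hTG₁ : T * G₁ = 0 := by
    ext x
    exact hTd _ (F₁ (defectTo T x)).2
  have hTG₂ : T * G₂ = 0 := by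
    ext x
    exact hTd _ (F₂ (defectTo T x)).2
  have hG₁D : G₁ * defect T = G₁ := by
    ext x
    show ((F₁ (defectTo T (defect T x)) : defectSpace T) : H) = _
    have : defectTo T (defect T x) = defectTo T x := by
      apply Subtype.ext
      show defect T (defect T x) = defect T x
      rw [← ContinuousLinearMap.mul_apply, hDD]
    rw [this]; rfl
  have hG₂D : G₂ * defect T = G₂ := by
    ext x
    show ((F₂ (defectTo T (defect T x)) : defectSpace T) : H) = _
    have : defectTo T (defect T x) = defectTo T x := by
      apply Subtype.ext
      show defect T (defect T x) = defect T x
      rw [← ContinuousLinearMap.mul_apply, hDD]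
    rw [this]; rfl
  set A₁ : H →L[ℂ] H := adjoint T₂ * T with hA₁
  set A₂ : H →L[ℂ] H := adjoint T₁ * T with hA₂
  have hA₁G₂ : A₁ * G₂ = 0 := by rw [hA₁, mul_assoc, hTG₂, mul_zero]
  have hA₂G₁ : A₂ * G₁ = 0 := by rw [hA₂, mul_assoc, hTG₁, mul_zero]
  have hA₁Dz : A₁ * defect T = 0 := by rw [hA₁, mul_assoc, hTD, mul_zero]
  have hA₂Dz : A₂ * defect T = 0 := by rw [hA₂, mul_assoc, hTD, mul_zero]
  have hcomm : (A₁ + G₁) * (A₂ + G₂) = (A₂ + G₂) * (A₁ + G₁) := by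
    rw [← hT₁, ← hT₂]; exact hT.1.eq
  have e2 : A₁*A₂ + G₁*A₂ + G₁*G₂ = A₂*A₁ + G₂*A₁ + G₂*G₁ := by
    have h1 : (A₁ + G₁) * (A₂ + G₂) = A₁*A₂ + A₁*G₂ + G₁*A₂ + G₁*G₂ := by noncomm_ring
    have h2 : (A₂ + G₂) * (A₁ + G₁) = A₂*A₁ + A₂*G₁ + G₂*A₁ + G₂*G₁ := by noncomm_ring
    rw [h1, h2, hA₁G₂, hA₂G₁] at hcomm
    simpa using hcomm
  have key : G₁ * G₂ = G₂ * G₁ := by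
    have e3 := congrArg (· * defect T) e2
    simp only [add_mul, mul_assoc] at e3
    rw [hA₂Dz, hA₁Dz] at e3
    simp only [mul_zero, zero_add, add_zero] at e3
    rw [hG₂D, hG₁D] at e3
    exact e3
  ext d
  have h1 : ((F₁ * F₂) d : H) = (G₁ * G₂) (d : H) := by
    show ((F₁ (F₂ d) : defectSpace T) : H) = _
    show _ = ((F₁ (defectTo T ((F₂ (defectTo T (d : H))) : H)) : defectSpace T) : H)
    rw [hDId, hDId]
  have h2 : ((F₂ * F₁) d : H) = (G₂ * G₁) (d : H) := by
    show ((F₂ (F₁ d) : defectSpace T) : H) = _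
    show _ = ((F₂ (defectTo T ((F₁ (defectTo T (d : H))) : H)) : defectSpace T) : H)
    rw [hDId, hDId]
  rw [h1, h2, key]
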